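/- Let k ≥ 6 be an integer and let ξ : {0,…,k−2} × E_N → C satisfy the Manin relations (1) ξ(j; u, v) + (−1)^j ξ(k−2−j; v, −u) = 0 and (2) ξ(j; u, v) + ∑_{i=0}^{k−2−j} (−1)^{k−2−i} C(k−2−j, i) ξ(i; v, −u−v) + ∑_{i=k−2−j}^{k−2} (−1)^i C(j, i−k+2+j) ξ(i; −u−v, u) = 0 for all j ∈ {0,…,k−2} and (u,v) ∈ E_N. Suppose ξ(j; u, v) = 0 whenever j ∉ {1, k−3} and at least one of gcd(u,N) = 1 or gcd(v,N) = 1 holds. Then ξ(1; 0, 1) = 0 and ξ(k−3; 0, 1) = 0. -/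

import Mathlib

open Finset

/-- Manin-relation combinatorics in weight `k ≥ 6`. If
`ξ : {0,…,k−2} × E_N → ℂ` satisfies the two Manin relations (1) and (2) and vanishes at
all `(j; u, v)` with `j ∉ {1, k−3}` and (`gcd(u,N) = 1` or `gcd(v,N) = 1`), then
`ξ(1; 0, 1) = 0` and `ξ(k−3; 0, 1) = 0`. -/
theorem manin_relations_high_weight (N : ℕ) (k : ℕ) (hk : 6 ≤ k)
    (ξ : ℕ → ZMod N → ZMod N → ℂ)
    (rel1 : ∀ j : ℕ, j ≤ k - 2 → ∀ u v : ZMod N,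
      Nat.gcd (Nat.gcd (ZMod.val u) (ZMod.val v)) N = 1 →
      ξ j u v + (-1 : ℂ) ^ j * ξ (k - 2 - j) v (-u) = 0)
    (rel2 : ∀ j : ℕ, j ≤ k - 2 → ∀ u v : ZMod N,
      Nat.gcd (Nat.gcd (ZMod.val u) (ZMod.val v)) N = 1 →
      ξ j u v
        + ∑ i ∈ Finset.range (k - 2 - j + 1),
            (-1 : ℂ) ^ (k - 2 - i) * (Nat.choose (k - 2 - j) i : ℂ) * ξ i v (-u - v)
        + ∑ i ∈ Finset.Icc (k - 2 - j) (k - 2),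
            (-1 : ℂ) ^ i * (Nat.choose j (i - (k - 2 - j)) : ℂ) * ξ i (-u - v) u = 0)
    (vanish : ∀ j : ℕ, j ≤ k - 2 → j ≠ 1 → j ≠ k - 3 → ∀ u v : ZMod N,
      Nat.gcd (Nat.gcd (ZMod.val u) (ZMod.val v)) N = 1 →
      (Nat.gcd (ZMod.val u) N = 1 ∨ Nat.gcd (ZMod.val v) N = 1) →
      ξ j u v = 0) :
    ξ 1 0 1 = 0 ∧ ξ (k - 3) 0 1 = 0 := by
  obtain ⟨m, rfl⟩ : ∃ m, k = m + 6 := ⟨k - 6, by omega⟩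
  -- coprimality helpers
  have unit_cop : ∀ x : ZMod N, IsUnit x → Nat.gcd (ZMod.val x) N = 1 := by
    intro x hx
    have := ZMod.val_coe_unit_coprime hx.unit
    rwa [hx.unit_spec] at this
  have hu1 : Nat.gcd (ZMod.val (1 : ZMod N)) N = 1 := unit_cop _ isUnit_one
  have hum1 : Nat.gcd (ZMod.val (-1 : ZMod N)) N = 1 := unit_cop _ isUnit_one.neg
  have cop : ∀ x y : ZMod N,
      (Nat.gcd (ZMod.val x) N = 1 ∨ Nat.gcd (ZMod.val y) N = 1) →
      Nat.gcd (Nat.gcd (ZMod.val x) (ZMod.val y)) N = 1 := by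
    intro x y h
    rcases h with h | h
    · exact Nat.Coprime.coprime_dvd_left (Nat.gcd_dvd_left _ _) h
    · exact Nat.Coprime.coprime_dvd_left (Nat.gcd_dvd_right _ _) h
  have hε : (-1 : ℂ) ^ m * (-1 : ℂ) ^ m = 1 := by
    rw [← pow_add]
    exact Even.neg_one_pow ⟨m, rfl⟩
  -- key consequence of rel2 with j = 2
  have key2 : ∀ u v w : ZMod N, w = -u - v →
      (Nat.gcd (ZMod.val u) N = 1 ∨ Nat.gcd (ZMod.val v) N = 1) →
      (Nat.gcd (ZMod.val v) N = 1 ∨ Nat.gcd (ZMod.val w) N = 1) →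
      (Nat.gcd (ZMod.val w) N = 1 ∨ Nat.gcd (ZMod.val u) N = 1) →
      ((m : ℂ) + 2) * ξ 1 v w + 2 * ξ (m + 3) w u = 0 := by
    intro u v w hw h1 h2 h3
    have h := rel2 2 (by omega) u v (cop _ _ h1)
    rw [show m + 6 - 2 - 2 + 1 = m + 3 from by omega,
        show m + 6 - 2 - 2 = m + 2 from by omega,
        show m + 6 - 2 = m + 4 from by omega, ← hw] at h
    have hs1 : ∑ i ∈ Finset.range (m + 3),
        (-1 : ℂ) ^ (m + 4 - i) * (Nat.choose (m + 2) i : ℂ) * ξ i v w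
        = (-1 : ℂ) ^ (m + 3) * ((m : ℂ) + 2) * ξ 1 v w := by
      rw [Finset.sum_eq_single_of_mem 1 (by simp)
        (fun b hb hb1 => by
          rw [vanish b (by simp at hb; omega) hb1 (by simp at hb; omega) v w
            (cop _ _ h2) h2, mul_zero])]
      rw [show m + 4 - 1 = m + 3 from by omega, Nat.choose_one_right]
      push_cast
      ring
    have hs2 : ∑ i ∈ Finset.Icc (m + 2) (m + 4),
        (-1 : ℂ) ^ i * (Nat.choose 2 (i - (m + 2)) : ℂ) * ξ i w u
        = (-1 : ℂ) ^ (m + 3) * 2 * ξ (m + 3) w u := by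
      rw [Finset.sum_eq_single_of_mem (m + 3) (by simp [Finset.mem_Icc])
        (fun b hb hb1 => by
          rw [vanish b (by simp [Finset.mem_Icc] at hb; omega)
            (by simp [Finset.mem_Icc] at hb; omega) hb1 w u
            (cop _ _ h3) h3, mul_zero])]
      rw [show m + 3 - (m + 2) = 1 from by omega]
      norm_num
    have h0 : ξ 2 u v = 0 := vanish 2 (by omega) (by omega) (by omega) u v (cop _ _ h1) h1
    rw [hs1, hs2, h0] at h
    linear_combination (-1 : ℂ) ^ (m + 3) * h
      - (((m : ℂ) + 2) * ξ 1 v w + 2 * ξ (m + 3) w u) * hε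
  -- instances of key2
  have hc01 : (Nat.gcd (ZMod.val (0 : ZMod N)) N = 1 ∨ Nat.gcd (ZMod.val (1 : ZMod N)) N = 1) :=
    Or.inr hu1
  have hEA := key2 (-1) 0 1 (by ring) (Or.inl hum1) hc01 (Or.inl hu1)
  have hEB := key2 0 1 (-1) (by ring) (Or.inr hu1) (Or.inl hu1) (Or.inl hum1)
  have hEC := key2 1 (-1) 0 (by ring) (Or.inl hu1) (Or.inl hum1) (Or.inr hu1)
  -- rel2 with j = 1 at (0,1)
  have hED : ξ 1 0 1 + ((-1 : ℂ) ^ (m + 3) * ((m : ℂ) + 3) * ξ 1 1 (-1)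
      + (-1 : ℂ) ^ 1 * ξ (m + 3) 1 (-1)) + (-1 : ℂ) ^ (m + 3) * ξ (m + 3) (-1) 0 = 0 := by
    have h := rel2 1 (by omega) 0 1 (cop _ _ hc01)
    rw [show m + 6 - 2 - 1 + 1 = m + 4 from by omega,
        show m + 6 - 2 - 1 = m + 3 from by omega,
        show m + 6 - 2 = m + 4 from by omega] at h
    simp only [neg_zero, zero_sub] at h
    have hs1 : ∑ i ∈ Finset.range (m + 4),
        (-1 : ℂ) ^ (m + 4 - i) * (Nat.choose (m + 3) i : ℂ) * ξ i 1 (-1)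
        = (-1 : ℂ) ^ (m + 3) * ((m : ℂ) + 3) * ξ 1 1 (-1)
          + (-1 : ℂ) ^ 1 * ξ (m + 3) 1 (-1) := by
      rw [← Finset.sum_subset (s₁ := ({1, m + 3} : Finset ℕ))
        (by intro x hx; simp at hx ⊢; omega)
        (fun x hx hx' => by
          simp at hx'
          rw [vanish x (by simp at hx; omega) hx'.1 (by omega) 1 (-1)
            (cop _ _ (Or.inl hu1)) (Or.inl hu1), mul_zero])]
      rw [Finset.sum_pair (by omega : (1 : ℕ) ≠ m + 3)]
      rw [show m + 4 - 1 = m + 3 from by omega, Nat.choose_one_right,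
        show m + 4 - (m + 3) = 1 from by omega, Nat.choose_self]
      push_cast
      ring
    have hs2 : ∑ i ∈ Finset.Icc (m + 3) (m + 4),
        (-1 : ℂ) ^ i * (Nat.choose 1 (i - (m + 3)) : ℂ) * ξ i (-1) 0
        = (-1 : ℂ) ^ (m + 3) * ξ (m + 3) (-1) 0 := by
      rw [Finset.sum_eq_single_of_mem (m + 3) (by simp [Finset.mem_Icc])
        (fun b hb hb1 => by
          rw [vanish b (by simp [Finset.mem_Icc] at hb; omega)
            (by simp [Finset.mem_Icc] at hb; omega) hb1 (-1) 0
            (cop _ _ (Or.inl hum1)) (Or.inl hum1), mul_zero])]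
      rw [Nat.sub_self, Nat.choose_zero_right]
      push_cast
      ring
    rw [hs1, hs2] at h
    exact h
  -- rel1 instances
  have hEE : ξ (m + 3) 1 (-1) + (-1 : ℂ) ^ (m + 3) * ξ 1 (-1) (-1) = 0 := by
    have h := rel1 (m + 3) (by omega) 1 (-1) (cop _ _ (Or.inl hu1))
    rwa [show m + 6 - 2 - (m + 3) = 1 from by omega] at h
  have hEF : ξ (m + 3) (-1) 0 + (-1 : ℂ) ^ (m + 3) * ξ 1 0 1 = 0 := by
    have h := rel1 (m + 3) (by omega) (-1) 0 (cop _ _ (Or.inl hum1))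
    rwa [show m + 6 - 2 - (m + 3) = 1 from by omega, neg_neg] at h
  have hEH : ξ 1 (-1) 0 + (-1 : ℂ) ^ 1 * ξ (m + 3) 0 1 = 0 := by
    have h := rel1 1 (by omega) (-1) 0 (cop _ _ (Or.inl hum1))
    rwa [show m + 6 - 2 - 1 = m + 3 from by omega, neg_neg] at h
  -- finish
  have hm4 : ((m : ℂ) + 4) ≠ 0 := by
    have : ((m : ℂ) + 4) = ((m + 4 : ℕ) : ℂ) := by push_cast; ring
    rw [this]
    exact_mod_cast (by omega : m + 4 ≠ 0)
  have hR : ((m : ℂ) + 4) * ξ (m + 3) 0 1 = 0 := by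
    linear_combination hEC - ((m : ℂ) + 2) * hEH
  have hA : ((m : ℂ) + 4) ^ 2 * ξ 1 0 1 = 0 := by
    linear_combination 2 * ((m : ℂ) + 2) * hED + ((m : ℂ) + 2) * hEA
      + 2 * (-1 : ℂ) ^ m * ((m : ℂ) + 3) * hEB - 2 * (-1 : ℂ) ^ m * ((m : ℂ) + 4) * hEF
      - (2 * (m : ℂ) + 8) * ξ 1 0 1 * hε
  constructor
  · have := mul_eq_zero.mp hA
    rcases this with h | h
    · exact absurd h (pow_ne_zero 2 hm4)
    · exact h
  · rw [show m + 6 - 3 = m + 3 from by omega]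
    exact (mul_eq_zero.mp hR).resolve_left hm4
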